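/- Fix ς ∈ (0,1) and set c = (1+ς)/(1-ς). Define φ : {z ∈ ℂ : |z| < 1} → ℂ by φ(z) = exp(c·(1+z)/(z-1)). Then φ maps the open unit disk into the punctured unit disk (in fact 0 < |φ(z)| < 1), and for every z with |z| < 1 one has |φ'(z)|² / ( |φ(z)|² · (log|φ(z)|)² ) = 4/(1-|z|²)². In particular this quantity is independent of ς. -/

import Mathlib

open Complex

lemma stmt2_helper (a c n m : ℝ) (ha : 0 < a) (hc : c ≠ 0) (hm : m ≠ 0)
    (hn : n - 1 ≠ 0) :
    (a * (2 * c / m)) ^ 2 / (a ^ 2 * (c * ((n - 1) / m)) ^ 2) = 4 / (1 - n) ^ 2 := by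
  have ha' : a ≠ 0 := ne_of_gt ha
  have h1 : (1 : ℝ) - n ≠ 0 := fun h => hn (by linarith)
  field_simp
  ring

/-- Quasi-coordinate computation: for ς ∈ (0,1), c = (1+ς)/(1-ς) and
φ(z) = exp(c(1+z)/(z-1)), the map φ sends the unit disk into the punctured disk and
|φ'(z)|²/(|φ(z)|²(log|φ(z)|)²) = 4/(1-|z|²)², independently of ς. -/
theorem stmt2 (ς : ℝ) (hς : ς ∈ Set.Ioo (0 : ℝ) 1)
    (c : ℝ) (hc : c = (1 + ς) / (1 - ς))
    (φ : ℂ → ℂ) (hφ : ∀ z, φ z = Complex.exp ((c : ℂ) * (1 + z) / (z - 1)))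
    (z : ℂ) (hz : ‖z‖ < 1) :
    (0 < ‖φ z‖ ∧ ‖φ z‖ < 1) ∧
    (‖deriv φ z‖) ^ 2 /
        ((‖φ z‖) ^ 2 * (Real.log (‖φ z‖)) ^ 2)
      = 4 / (1 - (‖z‖) ^ 2) ^ 2 := by
  obtain ⟨h0, h1⟩ := hς
  have hc0 : 0 < c := by
    rw [hc]; apply div_pos <;> linarith
  have hz1 : z ≠ 1 := by
    intro h; rw [h] at hz; simp at hz
  have hzz : z - 1 ≠ 0 := sub_ne_zero.mpr hz1
  have hns : Complex.normSq (z - 1) ≠ 0 := (Complex.normSq_pos.mpr hzz).ne'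
  have hns' : 0 < Complex.normSq (z - 1) := Complex.normSq_pos.mpr hzz
  have hnz : Complex.normSq z < 1 := by
    have := Complex.sq_norm z
    nlinarith [norm_nonneg z]
  -- real part computation
  have hre : ((c : ℂ) * (1 + z) / (z - 1)).re
      = c * ((Complex.normSq z - 1) / Complex.normSq (z - 1)) := by
    rw [mul_div_assoc, Complex.re_ofReal_mul, Complex.div_re]
    simp only [Complex.add_re, Complex.one_re, Complex.add_im, Complex.one_im,
      Complex.sub_re, Complex.sub_im, Complex.normSq_apply]
    ring
  -- abs of φ z
  have habs : ‖φ z‖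
      = Real.exp (c * ((Complex.normSq z - 1) / Complex.normSq (z - 1))) := by
    rw [hφ, Complex.norm_exp, hre]
  have hL : Real.log (‖φ z‖)
      = c * ((Complex.normSq z - 1) / Complex.normSq (z - 1)) := by
    rw [habs, Real.log_exp]
  have hpos : 0 < ‖φ z‖ := by rw [habs]; exact Real.exp_pos _
  have hlt1 : ‖φ z‖ < 1 := by
    rw [habs]
    apply Real.exp_lt_one_iff.mpr
    apply mul_neg_of_pos_of_neg hc0
    apply div_neg_of_neg_of_pos _ hns'
    linarith
  -- derivative
  have hg : HasDerivAt (fun w : ℂ => (c : ℂ) * (1 + w) / (w - 1)) (-2 * c / (z - 1) ^ 2) z := by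
    have h1 : HasDerivAt (fun w : ℂ => (c : ℂ) * (1 + w)) (c : ℂ) z := by
      simpa using ((hasDerivAt_id z).const_add (1 : ℂ)).const_mul (c : ℂ)
    have h2 : HasDerivAt (fun w : ℂ => w - 1) 1 z := (hasDerivAt_id z).sub_const 1
    have h3 := h1.div h2 hzz
    refine h3.congr_deriv ?_
    ring
  have hφeq : φ = fun w => Complex.exp ((c : ℂ) * (1 + w) / (w - 1)) := funext hφ
  have hd : deriv φ z = φ z * (-2 * c / (z - 1) ^ 2) := by
    rw [hφeq]
    rw [hg.cexp.deriv]
  have habsd : ‖deriv φ z‖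
      = ‖φ z‖ * (2 * c / Complex.normSq (z - 1)) := by
    rw [hd, norm_mul, norm_div, norm_mul, norm_pow, Complex.sq_norm, norm_neg]
    simp [Complex.norm_real, abs_of_pos hc0]
  refine ⟨⟨hpos, hlt1⟩, ?_⟩
  rw [habsd, hL, show (‖z‖) ^ 2 = Complex.normSq z from Complex.sq_norm z]
  have hc' : (c : ℝ) ≠ 0 := ne_of_gt hc0
  have hn1 : Complex.normSq z - 1 ≠ 0 := by linarith
  exact stmt2_helper _ _ _ _ hpos hc' hns hn1
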